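/- Let I be a graded module over a quantum polynomial ring A in three variables with Hilbert series h(t) = 1/(1-t)³ - s(t)/(1-t) for a Castelnuovo polynomial s of weight n, and suppose I has projective dimension 1 and Hom-condition Hom_A(I,I) = k. Then dim_k Ext¹_A(I,I) = 1 + n + c, where c is the constant term of (t^{-1} - t^{-2}) s(t^{-1}) s(t). -/
import Mathlib


/-- Coefficients of `1/(1-t)³`. -/
def hilb3 : ℤ → ℤ := fun m => if 0 ≤ m then (m + 1) * (m + 2) / 2 else 0

/-- Coefficients of `1/(1-t)`. -/
def hilb1 : ℤ → ℤ := fun m => if 0 ≤ m then 1 else 0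

/-- A Castelnuovo function, indexed by `ℤ`. -/
def IsCastelnuovo (s : ℤ → ℤ) : Prop :=
  (Function.support s).Finite ∧ (∀ i : ℤ, i < 0 → s i = 0) ∧ (∀ i : ℤ, 0 ≤ s i) ∧
  ∃ σ : ℤ, 0 ≤ σ ∧ (∀ i : ℤ, 0 ≤ i → i < σ → s i = i + 1) ∧ s σ ≤ σ ∧
    ∀ i : ℤ, σ ≤ i → s (i + 1) ≤ s i

lemma hilb1_second (m : ℤ) :
    hilb1 m - 2 * hilb1 (m + 1) + hilb1 (m + 2) =
      (if m = -2 then 1 else 0) - (if m = -1 then 1 else 0) := by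
  unfold hilb1; split_ifs <;> omega

lemma hilb3_second (m : ℤ) :
    hilb3 m - 2 * hilb3 (m + 1) + hilb3 (m + 2) = hilb1 (m + 2) := by
  obtain ⟨k, hk⟩ := Int.even_mul_succ_self m
  have hk' : m * m + m = k + k := by linear_combination hk
  unfold hilb3 hilb1
  rw [show (m + 1) * (m + 2) = (m * m + m) + (2 * m + 2) from by ring,
      show (m + 1 + 1) * (m + 1 + 2) = (m * m + m) + (4 * m + 6) from by ring,
      show (m + 2 + 1) * (m + 2 + 2) = (m * m + m) + (6 * m + 12) from by ring, hk']
  rcases le_or_gt 0 m with h | h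
  · rw [if_pos h, if_pos (show (0:ℤ) ≤ m + 1 by omega), if_pos (show (0:ℤ) ≤ m + 2 by omega),
      if_pos (show (0:ℤ) ≤ m + 2 by omega)]
    omega
  · rcases le_or_gt 0 (m + 1) with h1 | h1
    · have hm : m = -1 := by omega
      subst hm
      norm_num at hk'
      split_ifs <;> omega
    · rcases le_or_gt 0 (m + 2) with h2 | h2
      · have hm : m = -2 := by omega
        subst hm
        norm_num at hk'
        split_ifs <;> omega
      · rw [if_neg (by omega), if_neg (by omega), if_neg (by omega), if_neg (by omega)]
        ring

/-- Proposition 7.2.2: let `I ≠ A` be a module over a quantum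
polynomial ring in three variables with Hilbert function
`h_I(t) = 1/(1-t)³ - s(t)/(1-t)`, `s` Castelnuovo of weight `n ≥ 1`, projective
dimension one (so graded `Ext²` vanishes) and `Hom_A(I,I) = k`. The Euler-form
identity gives, with `q(t) = (1-t)³h_I(t) = 1 - (1-t)²s(t)`, that
`e0 m - e1 m` is the `t^m`-coefficient of `h_I(t⁻¹) h_I(t) (1-t⁻¹)³`, namely
`∑_i q i · h_I(m+i)`.  Then `dim_k Ext¹_A(I,I) = e1 0 = 1 + n + c`, where `c` is
the constant term of `(t⁻¹ - t⁻²) s(t⁻¹) s(t)`, i.e. `c = ∑_j s_j (s_{j+1} - s_{j+2})`. -/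
theorem dim_ext_one_eq
    (s : ℤ → ℤ) (hs : IsCastelnuovo s)
    (n : ℤ) (hn : n = ∑ᶠ j : ℤ, s j) (hn1 : 1 ≤ n)
    (hI : ℤ → ℤ)
    (hhI : ∀ m : ℤ, hI m = hilb3 m - ∑ᶠ i : ℤ, s i * hilb1 (m - i))
    (q : ℤ → ℤ)
    (hq : ∀ i : ℤ, q i =
      (if i = 0 then 1 else 0) - (s i - 2 * s (i - 1) + s (i - 2)))
    (e0 e1 : ℤ → ℤ)
    (he0 : ∀ m : ℤ, e0 m = if m = 0 then 1 else 0)  -- Hom_A(I,I) = k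
    (hEuler : ∀ m : ℤ, e0 m - e1 m = ∑ᶠ i : ℤ, q i * hI (m + i))
    (c : ℤ) (hc : c = ∑ᶠ j : ℤ, s j * (s (j + 1) - s (j + 2))) :
    e1 0 = 1 + n + c := by
  obtain ⟨hfin, hneg, hpos, σ, hσ0, hlin, hσle, hdec⟩ := hs
  -- `s 0 = 1`
  have hs0 : s 0 = 1 := by
    rcases lt_or_ge 0 σ with h | h
    · simpa using hlin 0 le_rfl h
    · exfalso
      have hσ : σ = 0 := le_antisymm h hσ0
      subst hσ
      have hz : ∀ i : ℤ, s i = 0 := by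
        intro i
        rcases lt_or_ge i 0 with hi | hi
        · exact hneg i hi
        · have key : ∀ j : ℤ, 0 ≤ j → s j ≤ 0 :=
            Int.le_induction hσle fun m hm ih => le_trans (hdec m hm) ih
          exact le_antisymm (key i hi) (hpos i)
      have : s = fun _ => (0 : ℤ) := funext hz
      rw [this] at hn
      simp at hn
      omega
  -- bound the support of `s`
  obtain ⟨N0, hN0⟩ := hfin.bddAbove
  set N := max N0 0 with hNdef
  have hNnn : (0 : ℤ) ≤ N := le_max_right _ _
  set I0 := Finset.Icc (0 : ℤ) N with hI0def
  set I2 := Finset.Icc (0 : ℤ) (N + 2) with hI2def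
  have hz : ∀ i : ℤ, i ∉ I0 → s i = 0 := by
    intro i hi
    rw [hI0def, Finset.mem_Icc] at hi
    push_neg at hi
    rcases lt_or_ge i 0 with h | h
    · exact hneg i h
    · by_contra hne
      have h1 : i ≤ N0 := hN0 (show i ∈ Function.support s from hne)
      have h2 : N0 ≤ N := le_max_left _ _
      have := hi h
      omega
  have hsupp : Function.support s ⊆ (I0 : Set ℤ) := by
    intro x hx
    rw [Function.mem_support] at hx
    by_contra hxI
    exact hx (hz x (by simpa using hxI))
  have hsum_s : ∀ g : ℤ → ℤ, ∑ᶠ i : ℤ, s i * g i = ∑ i ∈ I0, s i * g i := by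
    intro g
    apply finsum_eq_sum_of_support_subset
    intro x hx
    rw [Function.mem_support] at hx
    have hsx : s x ≠ 0 := fun h => hx (by rw [h, zero_mul])
    exact hsupp hsx
  have hn' : n = ∑ i ∈ I0, s i := hn.trans (finsum_eq_sum_of_support_subset _ hsupp)
  have hhI' : ∀ m : ℤ, hI m = hilb3 m - ∑ i ∈ I0, s i * hilb1 (m - i) := fun m => by
    rw [hhI m, hsum_s fun i => hilb1 (m - i)]
  have hc' : c = ∑ j ∈ I0, s j * (s (j + 1) - s (j + 2)) := by
    rw [hc, hsum_s fun j => s (j + 1) - s (j + 2)]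
  -- Euler identity at `m = 0` as a finite sum
  have hE : e0 0 - e1 0 = ∑ i ∈ I2, q i * hI i := by
    rw [hEuler 0]
    simp only [zero_add]
    apply finsum_eq_sum_of_support_subset
    intro x hx
    rw [Function.mem_support] at hx
    by_contra hxn
    apply hx
    have hxn' : x < 0 ∨ N + 2 < x := by
      by_contra hcon
      push_neg at hcon
      exact hxn (by rw [hI2def, Finset.coe_Icc, Set.mem_Icc]; omega)
    have h1 : s x = 0 := hz x (by rw [hI0def, Finset.mem_Icc]; push_neg; intro; omega)
    have h2 : s (x - 1) = 0 := hz _ (by rw [hI0def, Finset.mem_Icc]; push_neg; intro; omega)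
    have h3 : s (x - 2) = 0 := hz _ (by rw [hI0def, Finset.mem_Icc]; push_neg; intro; omega)
    have hx0 : x ≠ 0 := by omega
    rw [hq x, h1, h2, h3, if_neg hx0]
    ring
  -- delta sums
  have hsc : ∀ a : ℤ, ∑ j ∈ I0, s j * (if j = a then (1 : ℤ) else 0) = s a := by
    intro a
    have h1 : ∀ j : ℤ, s j * (if j = a then (1 : ℤ) else 0) = if j = a then s j else 0 := by
      intro j; split <;> simp
    rw [Finset.sum_congr rfl fun j _ => h1 j, Finset.sum_ite_eq' I0 a s]
    split
    · rfl
    · exact (hz a (by assumption)).symm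
  -- shift sums
  have hshift0 : ∀ g : ℤ → ℤ, ∑ i ∈ I2, s i * g i = ∑ i ∈ I0, s i * g i := by
    intro g
    refine (Finset.sum_subset (Finset.Icc_subset_Icc le_rfl (by omega)) ?_).symm
    intro x _ hx
    rw [hz x hx, zero_mul]
  have hshift : ∀ (k : ℤ), 0 ≤ k → k ≤ 2 → ∀ g : ℤ → ℤ,
      ∑ i ∈ I2, s (i - k) * g i = ∑ i ∈ I0, s i * g (i + k) := by
    intro k hk0 hk2 g
    have h1 : ∑ i ∈ I2, s (i - k) * g i
        = ∑ i ∈ Finset.Icc (-k) (N + 2 - k), s i * g (i + k) := by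
      refine Finset.sum_nbij' (fun a => a - k) (fun a => a + k) ?_ ?_ ?_ ?_ ?_
      · intro a ha
        simp only [hI2def, Finset.mem_Icc] at ha ⊢
        omega
      · intro a ha
        simp only [hI2def, Finset.mem_Icc] at ha ⊢
        omega
      · intro a _; ring
      · intro a _; ring
      · intro a _; rw [sub_add_cancel]
    rw [h1]
    refine (Finset.sum_subset (Finset.Icc_subset_Icc (by omega) (by omega)) ?_).symm
    intro x _ hx
    rw [hz x hx, zero_mul]
  have hdelta : ∑ i ∈ I2, (if i = 0 then (1 : ℤ) else 0) * hI i = hI 0 := by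
    have h1 : ∀ i : ℤ, (if i = 0 then (1 : ℤ) else 0) * hI i = if i = 0 then hI i else 0 := by
      intro i; split <;> simp
    rw [Finset.sum_congr rfl fun i _ => h1 i, Finset.sum_ite_eq' I2 0 hI,
      if_pos (by rw [hI2def, Finset.mem_Icc]; omega)]
  -- value at 0
  have hI0val : hI 0 = 1 - s 0 := by
    rw [hhI' 0]
    have h1 : ∀ j ∈ I0, s j * hilb1 (0 - j) = s j * (if j = 0 then (1 : ℤ) else 0) := by
      intro j hj
      rw [hI0def, Finset.mem_Icc] at hj
      congr 1
      unfold hilb1; split_ifs <;> omega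
    rw [Finset.sum_congr rfl h1, hsc 0]
    norm_num [hilb3]
  -- second difference of `hI`
  have hDi : ∀ i : ℤ, 0 ≤ i → hI i - 2 * hI (i + 1) + hI (i + 2) = 1 + (s (i + 1) - s (i + 2)) := by
    intro i hi
    have h3 := hilb3_second i
    have h1 : hilb1 (i + 2) = 1 := by unfold hilb1; rw [if_pos (by omega)]
    have hT : (∑ j ∈ I0, s j * hilb1 (i - j)) - 2 * (∑ j ∈ I0, s j * hilb1 (i + 1 - j))
        + (∑ j ∈ I0, s j * hilb1 (i + 2 - j)) = s (i + 2) - s (i + 1) := by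
      have step1 : (∑ j ∈ I0, s j * hilb1 (i - j)) - 2 * (∑ j ∈ I0, s j * hilb1 (i + 1 - j))
          + (∑ j ∈ I0, s j * hilb1 (i + 2 - j))
          = ∑ j ∈ I0, (s j * (if j = i + 2 then (1:ℤ) else 0) - s j * (if j = i + 1 then (1:ℤ) else 0)) := by
        rw [Finset.mul_sum, ← Finset.sum_sub_distrib, ← Finset.sum_add_distrib]
        refine Finset.sum_congr rfl fun j _ => ?_
        have h2 := hilb1_second (i - j)
        rw [show i - j + 1 = i + 1 - j from by ring, show i - j + 2 = i + 2 - j from by ring,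
          show (if i - j = -2 then (1:ℤ) else 0) = (if j = i + 2 then (1:ℤ) else 0) from by
            split_ifs <;> omega,
          show (if i - j = -1 then (1:ℤ) else 0) = (if j = i + 1 then (1:ℤ) else 0) from by
            split_ifs <;> omega] at h2
        linear_combination s j * h2
      rw [step1, Finset.sum_sub_distrib, hsc (i + 2), hsc (i + 1)]
    rw [hhI' i, hhI' (i + 1), hhI' (i + 2)]
    rw [h1] at h3
    linarith [h3, hT]
  -- the main computation
  have hbig : ∑ i ∈ I2, q i * hI i = (1 - s 0) - (n + c) := by
    have step1 : ∑ i ∈ I2, q i * hI i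
        = ∑ i ∈ I2, ((if i = 0 then (1:ℤ) else 0) * hI i
            - (s i * hI i - 2 * (s (i - 1) * hI i) + s (i - 2) * hI i)) :=
      Finset.sum_congr rfl fun i _ => by rw [hq i]; ring
    have step2 : ∑ i ∈ I2, ((if i = 0 then (1:ℤ) else 0) * hI i
            - (s i * hI i - 2 * (s (i - 1) * hI i) + s (i - 2) * hI i))
        = hI 0 - ((∑ i ∈ I0, s i * hI i) - 2 * (∑ i ∈ I0, s i * hI (i + 1))
            + (∑ i ∈ I0, s i * hI (i + 2))) := by
      rw [Finset.sum_sub_distrib, hdelta, Finset.sum_add_distrib, Finset.sum_sub_distrib,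
        ← Finset.mul_sum, hshift0, hshift 1 (by omega) (by omega), hshift 2 (by omega) (by omega)]
    have step3 : (∑ i ∈ I0, s i * hI i) - 2 * (∑ i ∈ I0, s i * hI (i + 1))
            + (∑ i ∈ I0, s i * hI (i + 2)) = n + c := by
      have h1 : (∑ i ∈ I0, s i * hI i) - 2 * (∑ i ∈ I0, s i * hI (i + 1))
            + (∑ i ∈ I0, s i * hI (i + 2))
          = ∑ i ∈ I0, s i * (hI i - 2 * hI (i + 1) + hI (i + 2)) := by
        rw [Finset.mul_sum, ← Finset.sum_sub_distrib, ← Finset.sum_add_distrib]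
        exact Finset.sum_congr rfl fun i _ => by ring
      have h2 : ∑ i ∈ I0, s i * (hI i - 2 * hI (i + 1) + hI (i + 2))
          = ∑ i ∈ I0, (s i + s i * (s (i + 1) - s (i + 2))) := by
        refine Finset.sum_congr rfl fun i hi => ?_
        rw [hI0def, Finset.mem_Icc] at hi
        rw [hDi i hi.1]
        ring
      rw [h1, h2, Finset.sum_add_distrib, ← hn', ← hc']
    rw [step1, step2, step3, hI0val]
  -- conclude
  have he00 : e0 0 = 1 := by rw [he0 0, if_pos rfl]
  rw [hbig] at hE
  rw [hs0] at hE
  linarith
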